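/- arXiv:0903.2462 — 2 statements merged into one kernel-verified Lean document; each statement's English description precedes it below -/
import Mathlib

section
/- Let R be a reduction ring satisfying axiom (A4). If B ⊆ R is a Gröbner basis of a finitely generated ideal of R and B' ⊆ B is such that every β ∈ B reduces to 0 with respect to ⟹_{B'}, then B' is again a Gröbner basis of ideal(B); in particular α ⟹*_B 0 implies α ⟹*_{B'} 0 for all α ∈ R. -/
/-- The (two-sided) ideal generated by a set `B`: all finite sums `∑ gᵢ * bᵢ * hᵢ`
with `bᵢ ∈ B`. -/
def idealSpan {A : Type*} [Ring A] (B : Set A) : Set A :=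
  {x | ∃ (n : ℕ) (g h b : Fin n → A), (∀ i, b i ∈ B) ∧ x = ∑ i, g i * b i * h i}

/-- Reduction by a set: `a ⟹_B c` iff `a ⟹_b c` for some `b ∈ B`. -/
def RedBy {A : Type*} (red : A → A → A → Prop) (B : Set A) (a c : A) : Prop :=
  ∃ b ∈ B, red b a c

/-- A relation is terminating (Noetherian) if it admits no infinite chains. -/
def Terminating {A : Type*} (r : A → A → Prop) : Prop :=
  ¬ ∃ f : ℕ → A, ∀ n, r (f n) (f (n + 1))

/-- Confluence of a relation. -/
def Confluent {A : Type*} (r : A → A → Prop) : Prop :=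
  ∀ a b c : A, Relation.ReflTransGen r a b → Relation.ReflTransGen r a c →
    ∃ d, Relation.ReflTransGen r b d ∧ Relation.ReflTransGen r c d

/-- `G` is a Gröbner basis of the ideal `I`: `G` generates `I`, the
reflexive-symmetric-transitive closure of reduction by `G` equals the
congruence modulo `I`, and reduction by `G` is complete. -/
def GBOf {A : Type*} [Ring A] (red : A → A → A → Prop) (G : Set A) (I : Set A) : Prop :=
  idealSpan G = I ∧
    (∀ a b : A, Relation.EqvGen (RedBy red G) a b ↔ a - b ∈ I) ∧
    Terminating (RedBy red G) ∧ Confluent (RedBy red G)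

section Aux

variable {A : Type*} [Ring A]

lemma idealSpan_zero_mem (B : Set A) : (0 : A) ∈ idealSpan B :=
  ⟨0, (fun i => i.elim0), (fun i => i.elim0), (fun i => i.elim0), fun i => i.elim0, by simp⟩

lemma idealSpan_mono {B C : Set A} (h : B ⊆ C) : idealSpan B ⊆ idealSpan C := by
  rintro x ⟨n, g, hh, b, hb, rfl⟩
  exact ⟨n, g, hh, b, fun i => h (hb i), rfl⟩

lemma idealSpan_add_mem {B : Set A} {x y : A} (hx : x ∈ idealSpan B) (hy : y ∈ idealSpan B) :
    x + y ∈ idealSpan B := by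
  obtain ⟨n, g, h, b, hb, rfl⟩ := hx
  obtain ⟨m, g', h', b', hb', rfl⟩ := hy
  refine ⟨n + m, Fin.append g g', Fin.append h h', Fin.append b b', ?_, ?_⟩
  · intro i
    refine Fin.addCases (fun i => ?_) (fun i => ?_) i <;>
      simp [Fin.append_left, Fin.append_right, hb _, hb' _]
  · rw [Fin.sum_univ_add]
    simp [Fin.append_left, Fin.append_right]

lemma idealSpan_neg_mem {B : Set A} {x : A} (hx : x ∈ idealSpan B) : -x ∈ idealSpan B := by
  obtain ⟨n, g, h, b, hb, rfl⟩ := hx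
  refine ⟨n, fun i => -g i, h, b, hb, ?_⟩
  rw [← Finset.sum_neg_distrib]
  exact Finset.sum_congr rfl fun i _ => by simp [neg_mul]

lemma idealSpan_mul_mem {B : Set A} {x : A} (g h : A) (hx : x ∈ idealSpan B) :
    g * x * h ∈ idealSpan B := by
  obtain ⟨n, g', h', b, hb, rfl⟩ := hx
  refine ⟨n, fun i => g * g' i, fun i => h' i * h, b, hb, ?_⟩
  rw [Finset.mul_sum, Finset.sum_mul]
  exact Finset.sum_congr rfl fun i _ => by simp [mul_assoc]

lemma idealSpan_sum_mem {C : Set A} {n : ℕ} {f : Fin n → A} (hf : ∀ i, f i ∈ idealSpan C) :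
    ∑ i, f i ∈ idealSpan C := by
  induction n with
  | zero => simpa using idealSpan_zero_mem C
  | succ n ih =>
    rw [Fin.sum_univ_succ]
    exact idealSpan_add_mem (hf 0) (ih fun i => hf i.succ)

lemma idealSpan_le {B C : Set A} (h : ∀ b ∈ B, b ∈ idealSpan C) :
    idealSpan B ⊆ idealSpan C := by
  rintro x ⟨n, g, hh, b, hb, rfl⟩
  exact idealSpan_sum_mem fun i => idealSpan_mul_mem _ _ (h _ (hb i))

lemma idealSpan_zero_singleton {x : A} (hx : x ∈ idealSpan ({0} : Set A)) : x = 0 := by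
  obtain ⟨n, g, h, b, hb, rfl⟩ := hx
  refine Finset.sum_eq_zero fun i _ => ?_
  have : b i = 0 := hb i
  rw [this, mul_zero, zero_mul]

variable {red : A → A → A → Prop}

lemma rtg_sub_mem (hA2 : ∀ b a c : A, red b a c → a - c ∈ idealSpan {b})
    {B : Set A} {a c : A} (h : Relation.ReflTransGen (RedBy red B) a c) :
    a - c ∈ idealSpan B := by
  induction h with
  | refl => simpa using idealSpan_zero_mem B
  | @tail m c' _ hstep ih =>
    obtain ⟨β, hβ, hr⟩ := hstep
    have h2 : m - c' ∈ idealSpan B :=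
      idealSpan_mono (Set.singleton_subset_iff.mpr hβ) (hA2 _ _ _ hr)
    have h3 := idealSpan_add_mem ih h2
    rwa [sub_add_sub_cancel] at h3

lemma rtg_eqvGen {r : A → A → Prop} {a b : A} (h : Relation.ReflTransGen r a b) :
    Relation.EqvGen r a b := by
  induction h with
  | refl => exact Relation.EqvGen.refl a
  | tail _ hstep ih => exact Relation.EqvGen.trans _ _ _ ih (Relation.EqvGen.rel _ _ hstep)

lemma not_red_by_zero (hA1 : ∀ B : Set A, B.Finite → Terminating (RedBy red B))
    (hA2 : ∀ b a c : A, red b a c → a - c ∈ idealSpan {b}) (a c : A) : ¬ red 0 a c := by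
  intro h
  have hc : a - c ∈ idealSpan ({0} : Set A) := hA2 _ _ _ h
  have hac : a = c := by
    have := idealSpan_zero_singleton hc; exact sub_eq_zero.mp this
  subst hac
  exact hA1 {0} (Set.finite_singleton _) ⟨fun _ => a, fun _ => ⟨0, rfl, h⟩⟩

lemma not_red_zero (hA1 : ∀ B : Set A, B.Finite → Terminating (RedBy red B))
    (hA2 : ∀ b a c : A, red b a c → a - c ∈ idealSpan {b})
    (hA3 : ∀ a : A, a ≠ 0 → red a a 0) (b c : A) : ¬ red b 0 c := by
  intro h
  by_cases hc : c = 0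
  · subst hc
    exact hA1 {b} (Set.finite_singleton _) ⟨fun _ => 0, fun _ => ⟨b, rfl, h⟩⟩
  · have h2 : red c c 0 := hA3 c hc
    refine hA1 {b, c} (Set.Finite.insert _ (Set.finite_singleton _))
      ⟨fun n => if Even n then 0 else c, fun n => ?_⟩
    by_cases he : Even n
    · have he' : ¬ Even (n + 1) := by simp [Nat.even_add_one, he]
      simp only [he, he', if_true, if_false]
      exact ⟨b, Or.inl rfl, h⟩
    · have he' : Even (n + 1) := by simp [Nat.even_add_one, he]
      simp only [he, he', if_true, if_false]
      exact ⟨c, Or.inr rfl, h2⟩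

/-- Key consequence of (A4): if `α` is reducible by some `β` that reduces to `0`
w.r.t. `B'`, then `α` is reducible by `B'`. -/
lemma reducible_of_chain (hA1 : ∀ B : Set A, B.Finite → Terminating (RedBy red B))
    (hA2 : ∀ b a c : A, red b a c → a - c ∈ idealSpan {b})
    (hA4 : ∀ a b c d : A, (∃ x, red b a x) → red c b d →
        (∃ x, red c a x) ∨ (∃ x, red d a x))
    {B' : Set A} {β α : A} (hchain : Relation.ReflTransGen (RedBy red B') β 0) :
    (∃ x, red β α x) → ∃ x, RedBy red B' α x := by
  induction hchain using Relation.ReflTransGen.head_induction_on with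
  | refl =>
    rintro ⟨x, hx⟩
    exact absurd hx (not_red_by_zero hA1 hA2 α x)
  | @head cur nxt hstep _ ih =>
    rintro ⟨x, hx⟩
    obtain ⟨γ, hγ, hr⟩ := hstep
    rcases hA4 α cur γ nxt ⟨x, hx⟩ hr with ⟨y, hy⟩ | h2
    · exact ⟨y, γ, hγ, hy⟩
    · exact ih h2

lemma exists_nf {r : A → A → Prop} (hr : Terminating r) (a : A) :
    ∃ n, Relation.ReflTransGen r a n ∧ ∀ x, ¬ r n x := by
  by_contra hcon
  push_neg at hcon
  have step : ∀ s : {x // Relation.ReflTransGen r a x},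
      ∃ t : {x // Relation.ReflTransGen r a x}, r s.1 t.1 := by
    rintro ⟨x, hx⟩
    obtain ⟨y, hy⟩ := hcon x hx
    exact ⟨⟨y, hx.tail hy⟩, hy⟩
  choose f hf using step
  refine hr ⟨fun n => (f^[n] ⟨a, Relation.ReflTransGen.refl⟩).1, fun n => ?_⟩
  simp only [Function.iterate_succ_apply']
  exact hf _

lemma nf_rtg {r : A → A → Prop} {n d : A} (hn : ∀ x, ¬ r n x)
    (h : Relation.ReflTransGen r n d) : d = n := by
  rcases h.cases_head with h | ⟨c, hc, _⟩
  · exact h.symm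
  · exact absurd hc (hn c)

lemma joinable_of_eqvGen {r : A → A → Prop} (hc : Confluent r) {a b : A}
    (h : Relation.EqvGen r a b) :
    ∃ d, Relation.ReflTransGen r a d ∧ Relation.ReflTransGen r b d := by
  induction h with
  | rel a b h => exact ⟨b, Relation.ReflTransGen.single h, Relation.ReflTransGen.refl⟩
  | refl a => exact ⟨a, Relation.ReflTransGen.refl, Relation.ReflTransGen.refl⟩
  | symm a b _ ih => obtain ⟨d, h1, h2⟩ := ih; exact ⟨d, h2, h1⟩
  | trans a b c _ _ ih1 ih2 =>
    obtain ⟨d1, ha, hb1⟩ := ih1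
    obtain ⟨d2, hb2, hc2⟩ := ih2
    obtain ⟨e, he1, he2⟩ := hc b d1 d2 hb1 hb2
    exact ⟨e, ha.trans he1, hc2.trans he2⟩

end Aux

/-- In a reduction ring satisfying (A4): if `B` is a Gröbner basis of a finitely
generated ideal and `B' ⊆ B` is such that every element of `B` reduces to `0`
by `B'`, then `B'` is again a Gröbner basis of `ideal(B)`; in particular
everything reducing to `0` by `B` reduces to `0` by `B'`. -/
theorem GB_of_subset {A : Type*} [Ring A] (red : A → A → A → Prop)
    (hA1 : ∀ B : Set A, B.Finite → Terminating (RedBy red B))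
    (hA2 : ∀ b a c : A, red b a c → a - c ∈ idealSpan {b})
    (hA3 : ∀ a : A, a ≠ 0 → red a a 0)
    (hA4 : ∀ a b c d : A, (∃ x, red b a x) → red c b d →
        (∃ x, red c a x) ∨ (∃ x, red d a x))
    (hRR : ∀ B : Set A, B.Finite → ∃ G : Set A, G.Finite ∧ GBOf red G (idealSpan B))
    (B B' : Set A)
    (hfg : ∃ S : Set A, S.Finite ∧ idealSpan S = idealSpan B)
    (hGB : GBOf red B (idealSpan B))
    (hsub : B' ⊆ B)
    (hred0 : ∀ β ∈ B, Relation.ReflTransGen (RedBy red B') β 0) :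
    GBOf red B' (idealSpan B) ∧
      ∀ α : A, Relation.ReflTransGen (RedBy red B) α 0 →
        Relation.ReflTransGen (RedBy red B') α 0 := by
  obtain ⟨-, hEq, hTerm, hConf⟩ := hGB
  have hsubrel : ∀ a c : A, RedBy red B' a c → RedBy red B a c := by
    rintro a c ⟨b, hb, h⟩; exact ⟨b, hsub hb, h⟩
  have hTerm' : Terminating (RedBy red B') := by
    rintro ⟨f, hf⟩; exact hTerm ⟨f, fun n => hsubrel _ _ (hf n)⟩
  -- any element reducible by B is reducible by B'
  have hC : ∀ α : A, (∃ x, RedBy red B α x) → ∃ x, RedBy red B' α x := by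
    rintro α ⟨x, β, hβ, hr⟩
    exact reducible_of_chain hA1 hA2 hA4 (hred0 β hβ) ⟨x, hr⟩
  -- B'-normal forms are B-normal forms
  have hNF : ∀ a : A, (∀ x, ¬ RedBy red B' a x) → ∀ x, ¬ RedBy red B a x := by
    intro a h x hx
    obtain ⟨y, hy⟩ := hC a ⟨x, hx⟩
    exact h y hy
  -- equality of ideals
  have hspan : idealSpan B' = idealSpan B := by
    refine Set.Subset.antisymm (idealSpan_mono hsub) (idealSpan_le ?_)
    intro β hβ
    have h := rtg_sub_mem hA2 (hred0 β hβ)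
    rwa [sub_zero] at h
  -- confluence of reduction by B'
  have hconf' : Confluent (RedBy red B') := by
    intro a b c hab hac
    obtain ⟨nb, hb1, hb2⟩ := exists_nf hTerm' b
    obtain ⟨nc, hc1, hc2⟩ := exists_nf hTerm' c
    have h1 : Relation.ReflTransGen (RedBy red B) a nb :=
      Relation.ReflTransGen.mono hsubrel _ _ (hab.trans hb1)
    have h2 : Relation.ReflTransGen (RedBy red B) a nc :=
      Relation.ReflTransGen.mono hsubrel _ _ (hac.trans hc1)
    obtain ⟨d, hd1, hd2⟩ := hConf a nb nc h1 h2
    have e1 : d = nb := nf_rtg (hNF _ hb2) hd1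
    have e2 : d = nc := nf_rtg (hNF _ hc2) hd2
    refine ⟨nb, hb1, ?_⟩
    rw [← e1, e2]
    exact hc1
  -- the congruence characterization
  have hiff : ∀ a b : A, Relation.EqvGen (RedBy red B') a b ↔ a - b ∈ idealSpan B := by
    intro a b
    constructor
    · intro h
      exact (hEq a b).mp (h.mono hsubrel)
    · intro h
      obtain ⟨na, ha1, ha2⟩ := exists_nf hTerm' a
      obtain ⟨nb, hb1, hb2⟩ := exists_nf hTerm' b
      have hm1 : a - na ∈ idealSpan B := idealSpan_mono hsub (rtg_sub_mem hA2 ha1)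
      have hm2 : b - nb ∈ idealSpan B := idealSpan_mono hsub (rtg_sub_mem hA2 hb1)
      have hmem : na - nb ∈ idealSpan B := by
        have h3 := idealSpan_add_mem (idealSpan_add_mem (idealSpan_neg_mem hm1) h) hm2
        have heq : -(a - na) + (a - b) + (b - nb) = na - nb := by abel
        rwa [heq] at h3
      obtain ⟨d, hd1, hd2⟩ := joinable_of_eqvGen hConf ((hEq na nb).mpr hmem)
      have e1 : d = na := nf_rtg (hNF _ ha2) hd1
      have e2 : d = nb := nf_rtg (hNF _ hb2) hd2
      have hnab : na = nb := by rw [← e1, e2]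
      refine Relation.EqvGen.trans _ _ _ (rtg_eqvGen ha1) ?_
      rw [hnab]
      exact Relation.EqvGen.symm _ _ (rtg_eqvGen hb1)
  have hfinal : ∀ α : A, Relation.ReflTransGen (RedBy red B) α 0 →
      Relation.ReflTransGen (RedBy red B') α 0 := by
    intro α h
    have hm : α - 0 ∈ idealSpan B := rtg_sub_mem hA2 h
    obtain ⟨d, hd1, hd2⟩ := joinable_of_eqvGen hconf' ((hiff α 0).mpr hm)
    have hz : ∀ x, ¬ RedBy red B' 0 x := by
      rintro x ⟨b, _, hr⟩
      exact not_red_zero hA1 hA2 hA3 b x hr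
    have : d = 0 := nf_rtg hz hd2
    rwa [this] at hd1
  exact ⟨⟨hspan, hiff, hTerm', hconf'⟩, hfinal⟩
end

section
/- Let F be a set of nonzero polynomials in the function ring F_K over a field K. Then F is a right standard basis of ideal_r(F) if and only if for every tuple (t, f₁,…,f_k, m₁,…,m_k) with f_i ∈ F, m_i monomials, HT(f_i * m_i) = t for all i, and Σ_{i=1}^k HM(f_i * m_i) = 0, the polynomial Σ_{i=1}^k f_i * m_i has a right standard representation with respect to F. -/
variable {K T : Type*} [Field K] [LinearOrder T] [Nonempty T]

/-- The head term: the largest element of the support (junk value at `0`). -/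
noncomputable def HT (f : T →₀ K) : T :=
  if h : f.support.Nonempty then f.support.max' h else Classical.arbitrary T

/-- The head term as an element of `WithBot T` (`⊥` for the zero function). -/
def HTb (f : T →₀ K) : WithBot T := f.support.max

/-- The head coefficient. -/
noncomputable def HC (f : T →₀ K) : K := f (HT f)

/-- The head monomial. -/
noncomputable def HM (f : T →₀ K) : T →₀ K := Finsupp.single (HT f) (HC f)

/-- A monomial: a function of the form `α · t` with `α ≠ 0`. -/
def IsMonomial (m : T →₀ K) : Prop :=
  ∃ (t : T) (α : K), α ≠ 0 ∧ m = Finsupp.single t α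

/-- The data of a function ring over the field `K` with set of terms `T`:
an associative, distributive multiplication on `T →₀ K` compatible with
scalar multiplication. -/
structure FRMul (K T : Type*) [Field K] [LinearOrder T] where
  mul : (T →₀ K) → (T →₀ K) → (T →₀ K)
  mul_assoc : ∀ f g h, mul (mul f g) h = mul f (mul g h)
  left_distrib : ∀ f g h, mul f (g + h) = mul f g + mul f h
  right_distrib : ∀ f g h, mul (f + g) h = mul f h + mul g h
  smul_mul : ∀ (a : K) (f g : T →₀ K), mul (a • f) g = a • mul f g
  mul_smul : ∀ (a : K) (f g : T →₀ K), mul f (a • g) = a • mul f g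

/-- The right ideal generated by `F`: finite sums `∑ fᵢ * hᵢ` with `fᵢ ∈ F`. -/
def rIdeal (M : FRMul K T) (F : Set (T →₀ K)) : Set (T →₀ K) :=
  {g | ∃ (n : ℕ) (fs hs : Fin n → (T →₀ K)),
    (∀ i, fs i ∈ F) ∧ g = ∑ i, M.mul (fs i) (hs i)}

/-- A right standard representation of `g` in terms of `F`. -/
def RightStdRep (M : FRMul K T) (F : Set (T →₀ K)) (g : T →₀ K) : Prop :=
  ∃ (n : ℕ) (fs ms : Fin n → (T →₀ K)),
    (∀ i, fs i ∈ F) ∧ (∀ i, IsMonomial (ms i)) ∧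
    g = ∑ i, M.mul (fs i) (ms i) ∧
    ∀ i, HTb (M.mul (fs i) (ms i)) ≤ HTb g

set_option linter.unusedSectionVars false
set_option maxHeartbeats 1000000


lemma HTb_eq_bot_iff (f : T →₀ K) : HTb f = ⊥ ↔ f = 0 := by
  simp [HTb, Finset.max_eq_bot, Finsupp.support_eq_empty]

lemma apply_eq_zero_of_HTb_lt {f : T →₀ K} {s : T} (h : HTb f < (s : WithBot T)) : f s = 0 := by
  by_contra hs
  exact absurd (Finset.le_max (Finsupp.mem_support_iff.2 hs)) (not_le.2 h)

lemma HT_eq_of_HTb {f : T →₀ K} {t : T} (h : HTb f = (t : WithBot T)) : HT f = t := by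
  have hne : f.support.Nonempty := by
    rw [Finset.nonempty_iff_ne_empty]
    intro he
    rw [HTb, he] at h; simp at h
  rw [HT, dif_pos hne]
  have := Finset.coe_max' hne
  rw [← HTb, h] at this
  exact_mod_cast this

lemma apply_HT_eq_HC {f : T →₀ K} {t : T} (h : HTb f = (t : WithBot T)) : f t = HC f := by
  rw [HC, HT_eq_of_HTb h]

lemma HM_eq_of_HTb {f : T →₀ K} {t : T} (h : HTb f = (t : WithBot T)) :
    HM f = Finsupp.single t (HC f) := by rw [HM, HT_eq_of_HTb h]

lemma list_sum_apply (l : List (T →₀ K)) (s : T) : l.sum s = (l.map fun f => f s).sum := by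
  induction l with
  | nil => simp
  | cons a l ih => simp [Finsupp.add_apply, ih]

lemma HTb_eq_coe {g : T →₀ K} {t : T} (h1 : g t ≠ 0) (h2 : ∀ s, t < s → g s = 0) :
    HTb g = (t : WithBot T) := by
  refine le_antisymm (Finset.max_le fun s hs => ?_) (Finset.le_max (Finsupp.mem_support_iff.2 h1))
  by_contra hlt
  exact (Finsupp.mem_support_iff.1 hs) (h2 s (by exact_mod_cast not_le.1 hlt))

lemma HTb_lt_coe {g : T →₀ K} {t : T} (h1 : g t = 0) (h2 : ∀ s, t < s → g s = 0) :
    HTb g < (t : WithBot T) := by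
  rcases Finset.eq_empty_or_nonempty g.support with he | hne
  · rw [HTb, he]; simp [WithBot.bot_lt_coe]
  · rw [HTb, ← Finset.coe_max' hne, WithBot.coe_lt_coe]
    have hmem := Finset.max'_mem _ hne
    rw [Finsupp.mem_support_iff] at hmem
    rcases lt_trichotomy (g.support.max' hne) t with h | h | h
    · exact h
    · exact absurd (h ▸ h1) hmem
    · exact absurd (h2 _ h) hmem

lemma le_foldr_max {L : List (WithBot T)} {x : WithBot T} (hx : x ∈ L) : x ≤ L.foldr max ⊥ := by
  induction L with
  | nil => simp at hx
  | cons a L ih =>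
    rcases List.mem_cons.1 hx with rfl | h
    · exact le_max_left _ _
    · exact (ih h).trans (le_max_right _ _)

lemma foldr_max_lt {L : List (WithBot T)} {c : WithBot T} (hc : ⊥ < c) (h : ∀ x ∈ L, x < c) :
    L.foldr max ⊥ < c := by
  induction L with
  | nil => simpa
  | cons a L ih =>
    simp only [List.foldr_cons, max_lt_iff]
    exact ⟨h a (by simp), ih fun x hx => h x (by simp [hx])⟩

lemma list_sum_eq_fin {β : Type*} [AddCommMonoid β] (f : (T →₀ K) × (T →₀ K) → β)
    (l : List ((T →₀ K) × (T →₀ K))) : (l.map f).sum = ∑ i : Fin l.length, f (l.get i) := by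
  conv_lhs => rw [← List.ofFn_get l]
  rw [List.map_ofFn, List.sum_ofFn]
  rfl


/-- mul f as an AddMonoidHom in the second argument. -/
noncomputable def mulHom (M : FRMul K T) (f : T →₀ K) : (T →₀ K) →+ (T →₀ K) :=
  AddMonoidHom.mk' (M.mul f) (M.left_distrib f)

lemma rsr_zero (M : FRMul K T) (F : Set (T →₀ K)) : RightStdRep M F 0 :=
  ⟨0, (fun i => i.elim0), (fun i => i.elim0), fun i => i.elim0, fun i => i.elim0, by simp,
    fun i => i.elim0⟩

lemma list_sum_filter_split {β : Type*} [AddCommMonoid β]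
    (f : (T →₀ K) × (T →₀ K) → β) (q : (T →₀ K) × (T →₀ K) → Prop) [DecidablePred q]
    (l : List ((T →₀ K) × (T →₀ K))) :
    ((l.filter fun a => decide (q a)).map f).sum
      + ((l.filter fun a => decide (¬ q a)).map f).sum = (l.map f).sum := by
  induction l with
  | nil => simp
  | cons a l ih =>
    by_cases h : q a <;>
      simp [List.filter_cons, h, ← ih, add_assoc, add_left_comm]

lemma exists_list_rep (M : FRMul K T) (F : Set (T →₀ K)) (g : T →₀ K)
    (hg : g ∈ rIdeal M F) :
    ∃ l : List ((T →₀ K) × (T →₀ K)), (∀ p ∈ l, p.1 ∈ F) ∧ (∀ p ∈ l, IsMonomial p.2) ∧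
      g = (l.map fun p => M.mul p.1 p.2).sum := by
  obtain ⟨n, fs, hs, hfs, rfl⟩ := hg
  induction n with
  | zero => exact ⟨[], by simp, by simp, by simp⟩
  | succ n ih =>
    obtain ⟨l, hl1, hl2, hl3⟩ := ih (fun i => fs i.succ) (fun i => hs i.succ)
      (fun i => hfs i.succ)
    refine ⟨((hs 0).support.toList.map fun t => (fs 0, Finsupp.single t (hs 0 t))) ++ l,
      ?_, ?_, ?_⟩
    · intro p hp
      rcases List.mem_append.1 hp with h | h
      · obtain ⟨t, _, rfl⟩ := List.mem_map.1 h
        exact hfs 0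
      · exact hl1 p h
    · intro p hp
      rcases List.mem_append.1 hp with h | h
      · obtain ⟨t, ht, rfl⟩ := List.mem_map.1 h
        exact ⟨t, hs 0 t, Finsupp.mem_support_iff.1 (Finset.mem_toList.1 ht), rfl⟩
      · exact hl2 p h
    · rw [Fin.sum_univ_succ, List.map_append, List.sum_append, ← hl3, List.map_map]
      congr 1
      have : ((fun p => M.mul p.1 p.2) ∘ fun t => (fs 0, Finsupp.single t (hs 0 t)))
          = fun t => M.mul (fs 0) (Finsupp.single t (hs 0 t)) := rfl
      rw [this, Finset.sum_map_toList]
      have : ∑ t ∈ (hs 0).support, M.mul (fs 0) (Finsupp.single t (hs 0 t))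
          = mulHom M (fs 0) (∑ t ∈ (hs 0).support, Finsupp.single t (hs 0 t)) := by
        rw [map_sum]; rfl
      rw [this]
      congr 1
      exact (Finsupp.sum_single (hs 0)).symm


lemma main_lemma (hwf : WellFounded ((· < ·) : T → T → Prop))
    (M : FRMul K T) (F : Set (T →₀ K))
    (crit : ∀ (k : ℕ) (t : T) (fs ms : Fin k → (T →₀ K)),
        (∀ i, fs i ∈ F) → (∀ i, IsMonomial (ms i)) →
        (∀ i, HTb (M.mul (fs i) (ms i)) = (t : WithBot T)) →
        (∑ i, HM (M.mul (fs i) (ms i))) = 0 →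
        RightStdRep M F (∑ i, M.mul (fs i) (ms i))) :
    ∀ (b : WithBot T) (l : List ((T →₀ K) × (T →₀ K))),
      (∀ p ∈ l, p.1 ∈ F) → (∀ p ∈ l, IsMonomial p.2) →
      (∀ p ∈ l, HTb (M.mul p.1 p.2) ≤ b) →
      RightStdRep M F ((l.map fun p => M.mul p.1 p.2).sum) := by
  classical
  haveI : WellFoundedLT T := ⟨hwf⟩
  have hwfb : WellFounded ((· < ·) : WithBot T → WithBot T → Prop) := IsWellFounded.wf
  intro b
  refine hwfb.induction (C := fun b => ∀ (l : List ((T →₀ K) × (T →₀ K))),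
      (∀ p ∈ l, p.1 ∈ F) → (∀ p ∈ l, IsMonomial p.2) →
      (∀ p ∈ l, HTb (M.mul p.1 p.2) ≤ b) →
      RightStdRep M F ((l.map fun p => M.mul p.1 p.2).sum)) b ?_
  clear b
  intro b ih l hF1 hF2 hb
  cases b with
  | bot =>
    have hz : (l.map fun p => M.mul p.1 p.2).sum = 0 := by
      apply List.sum_eq_zero
      intro x hx
      obtain ⟨p, hp, rfl⟩ := List.mem_map.1 hx
      exact (HTb_eq_bot_iff _).1 (le_bot_iff.1 (hb p hp))
    rw [hz]; exact rsr_zero M F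
  | coe t =>
    set f : (T →₀ K) × (T →₀ K) → (T →₀ K) := fun p => M.mul p.1 p.2 with hf
    set l₁ := l.filter (fun p => decide (HTb (f p) = (t : WithBot T))) with hl₁
    set l₂ := l.filter (fun p => decide (¬ HTb (f p) = (t : WithBot T))) with hl₂
    have hsplit : (l₁.map f).sum + (l₂.map f).sum = (l.map f).sum :=
      list_sum_filter_split f _ l
    have hl₁mem : ∀ p ∈ l₁, p ∈ l ∧ HTb (f p) = (t : WithBot T) := by
      intro p hp
      have := List.mem_filter.1 hp
      simpa using this
    have hl₂mem : ∀ p ∈ l₂, p ∈ l ∧ HTb (f p) < (t : WithBot T) := by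
      intro p hp
      have h := List.mem_filter.1 hp
      refine ⟨h.1, lt_of_le_of_ne (hb p h.1) ?_⟩
      simpa using h.2
    set g₁ := (l₁.map f).sum with hg₁
    set g₂ := (l₂.map f).sum with hg₂
    have hg₂0 : ∀ s : T, t ≤ s → g₂ s = 0 := by
      intro s hs
      rw [hg₂, list_sum_apply, List.map_map]
      apply List.sum_eq_zero
      intro x hx
      obtain ⟨p, hp, rfl⟩ := List.mem_map.1 hx
      exact apply_eq_zero_of_HTb_lt (lt_of_lt_of_le (hl₂mem p hp).2 (by exact_mod_cast hs))
    have hg₁hi : ∀ s : T, t < s → g₁ s = 0 := by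
      intro s hs
      rw [hg₁, list_sum_apply, List.map_map]
      apply List.sum_eq_zero
      intro x hx
      obtain ⟨p, hp, rfl⟩ := List.mem_map.1 hx
      exact apply_eq_zero_of_HTb_lt (lt_of_le_of_lt (le_of_eq (hl₁mem p hp).2)
        (by exact_mod_cast hs))
    set α : K := (l₁.map fun p => HC (f p)).sum with hα
    have hg₁t : g₁ t = α := by
      rw [hg₁, list_sum_apply, List.map_map, hα]
      congr 1
      apply List.map_congr_left
      intro p hp
      exact apply_HT_eq_HC (hl₁mem p hp).2
    by_cases hα0 : α = 0
    · -- head terms cancel: use crit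
      have hts : ∀ i : Fin l₁.length, HTb (M.mul (l₁.get i).1 (l₁.get i).2) = (t : WithBot T) :=
        fun i => (hl₁mem _ (List.get_mem l₁ i)).2
      have hHM : (∑ i : Fin l₁.length, HM (M.mul (l₁.get i).1 (l₁.get i).2)) = 0 := by
        have h1 : ∀ i : Fin l₁.length, HM (M.mul (l₁.get i).1 (l₁.get i).2)
            = Finsupp.single t (HC (f (l₁.get i))) := fun i => HM_eq_of_HTb (hts i)
        calc (∑ i : Fin l₁.length, HM (M.mul (l₁.get i).1 (l₁.get i).2))
            = ∑ i : Fin l₁.length, Finsupp.singleAddHom t (HC (f (l₁.get i))) := by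
              exact Finset.sum_congr rfl fun i _ => h1 i
          _ = Finsupp.singleAddHom t (∑ i : Fin l₁.length, HC (f (l₁.get i))) :=
              (map_sum _ _ _).symm
          _ = Finsupp.single t (∑ i : Fin l₁.length, HC (f (l₁.get i))) := rfl
          _ = Finsupp.single t α := by
              rw [hα, list_sum_eq_fin (fun p => HC (f p)) l₁]
          _ = 0 := by rw [hα0, Finsupp.single_zero]
      have hrep := crit l₁.length t (fun i => (l₁.get i).1) (fun i => (l₁.get i).2)
        (fun i => hF1 _ (hl₁mem _ (List.get_mem l₁ i)).1)
        (fun i => hF2 _ (hl₁mem _ (List.get_mem l₁ i)).1) hts hHM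
      have hg₁eq : (∑ i : Fin l₁.length, M.mul (l₁.get i).1 (l₁.get i).2) = g₁ :=
        (list_sum_eq_fin f l₁).symm
      rw [hg₁eq] at hrep
      obtain ⟨n', fs', ms', h1', h2', h3', h4'⟩ := hrep
      have hg₁lt : HTb g₁ < (t : WithBot T) := HTb_lt_coe (hg₁t.trans hα0) hg₁hi
      set l' : List ((T →₀ K) × (T →₀ K)) := (List.ofFn fun j => (fs' j, ms' j)) ++ l₂ with hl'
      have hl'mem : ∀ p ∈ l', HTb (f p) < (t : WithBot T) ∧ p.1 ∈ F ∧ IsMonomial p.2 := by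
        intro p hp
        rcases List.mem_append.1 hp with h | h
        · obtain ⟨j, rfl⟩ := List.mem_ofFn.1 h
          exact ⟨lt_of_le_of_lt (h4' j) hg₁lt, h1' j, h2' j⟩
        · exact ⟨(hl₂mem p h).2, hF1 p (hl₂mem p h).1, hF2 p (hl₂mem p h).1⟩
      set b' : WithBot T := ((l'.map fun p => HTb (f p)).foldr max ⊥) with hb'
      have hb'lt : b' < (t : WithBot T) := by
        apply foldr_max_lt (WithBot.bot_lt_coe t)
        intro x hx
        obtain ⟨p, hp, rfl⟩ := List.mem_map.1 hx
        exact (hl'mem p hp).1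
      have hres := ih b' hb'lt l' (fun p hp => (hl'mem p hp).2.1)
        (fun p hp => (hl'mem p hp).2.2)
        (fun p hp => le_foldr_max (List.mem_map_of_mem (f := fun p : (T →₀ K) × (T →₀ K) => HTb (M.mul p.1 p.2)) hp))
      have hsum : (l'.map f).sum = (l.map f).sum := by
        rw [hl', List.map_append, List.sum_append, ← hsplit]
        congr 1
        rw [List.map_ofFn, List.sum_ofFn]
        exact h3'.symm
      rwa [hsum] at hres
    · -- head terms don't cancel: l itself is standard
      have hgt : ((l.map f).sum) t = α := by
        rw [← hsplit, Finsupp.add_apply, hg₁t, hg₂0 t le_rfl, add_zero]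
      have hghi : ∀ s : T, t < s → ((l.map f).sum) s = 0 := by
        intro s hs
        rw [← hsplit, Finsupp.add_apply, hg₁hi s hs, hg₂0 s hs.le, add_zero]
      have hHTbg : HTb ((l.map f).sum) = (t : WithBot T) :=
        HTb_eq_coe (hgt ▸ hα0) hghi
      refine ⟨l.length, fun i => (l.get i).1, fun i => (l.get i).2,
        fun i => hF1 _ (List.get_mem l i), fun i => hF2 _ (List.get_mem l i),
        list_sum_eq_fin f l, fun i => ?_⟩
      rw [hHTbg]
      exact hb _ (List.get_mem l i)

/-- `F` is a right standard basis of the right ideal it generates if and only if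
for every critical situation `(t, f₁, …, f_k, m₁, …, m_k)` — `fᵢ ∈ F`, `mᵢ`
monomials with `HT (fᵢ * mᵢ) = t` and `∑ HM (fᵢ * mᵢ) = 0` — the polynomial
`∑ fᵢ * mᵢ` has a right standard representation in terms of `F`. -/
theorem rightStdBasis_iff_critical_situations
    (hwf : WellFounded ((· < ·) : T → T → Prop))
    (M : FRMul K T) (F : Set (T →₀ K)) (hF : ∀ f ∈ F, f ≠ 0) :
    (∀ g ∈ rIdeal M F, RightStdRep M F g) ↔
      ∀ (k : ℕ) (t : T) (fs ms : Fin k → (T →₀ K)),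
        (∀ i, fs i ∈ F) → (∀ i, IsMonomial (ms i)) →
        (∀ i, HTb (M.mul (fs i) (ms i)) = (t : WithBot T)) →
        (∑ i, HM (M.mul (fs i) (ms i))) = 0 →
        RightStdRep M F (∑ i, M.mul (fs i) (ms i)) := by
  constructor
  · intro h k t fs ms h1 h2 h3 h4
    exact h _ ⟨k, fs, ms, h1, rfl⟩
  · intro crit g hg
    obtain ⟨l, h1, h2, rfl⟩ := exists_list_rep M F g hg
    exact main_lemma hwf M F crit _ l h1 h2
      (fun p hp => le_foldr_max (List.mem_map_of_mem (f := fun p : (T →₀ K) × (T →₀ K) => HTb (M.mul p.1 p.2)) hp))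
end
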